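/- arXiv:1604.07694 — 2 statements merged into one kernel-verified Lean document; each statement's English description precedes it below -/
import Mathlib

section
/- Flow interchange lemma: Let B be a proper, lower semicontinuous functional on (X,d) possessing a λ-flow S^B for some λ ∈ ℝ, and let A be another proper, lower semicontinuous functional on (X,d) such that Dom(A) ⊆ Dom(B). Let τ > 0 and w̃ ∈ X be such that the functional u ↦ (1/(2τ)) d(u, w̃)² + A(u) is proper, and let w be a minimizer of this functional on X. Then B(w) + τ·D^B A(w) + (λ/2) d(w, w̃)² ≤ B(w̃), where D^B A(w) := limsup_{h↓0} (A(w) − A(S^B_h(w)))/h is the dissipation of A along the flow S^B. -/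
open Filter Set

private noncomputable def erealMulIso (c : ℝ) (hc : 0 < c) : EReal ≃o EReal where
  toFun := fun x => (c : EReal) * x
  invFun := fun x => ((c⁻¹ : ℝ) : EReal) * x
  left_inv := fun x => by
    show ((c⁻¹ : ℝ) : EReal) * ((c : EReal) * x) = x
    rw [← mul_assoc, ← EReal.coe_mul, inv_mul_cancel₀ hc.ne', EReal.coe_one, one_mul]
  right_inv := fun x => by
    show ((c : ℝ) : EReal) * (((c⁻¹ : ℝ) : EReal) * x) = x
    rw [← mul_assoc, ← EReal.coe_mul, mul_inv_cancel₀ hc.ne', EReal.coe_one, one_mul]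
  map_rel_iff' := by
    intro a b
    simp only [Equiv.coe_fn_mk]
    constructor
    · intro h
      have h2 := mul_le_mul_of_nonneg_left h
        (le_of_lt (EReal.coe_pos.mpr (inv_pos.mpr hc)))
      rwa [← mul_assoc, ← mul_assoc, ← EReal.coe_mul, inv_mul_cancel₀ hc.ne',
        EReal.coe_one, one_mul, one_mul] at h2
    · intro h
      exact mul_le_mul_of_nonneg_left h (le_of_lt (EReal.coe_pos.mpr hc))

private lemma limsup_coe_mul {α : Type*} {F : Filter α} {c : ℝ} (hc : 0 < c) (f : α → EReal) :
    Filter.limsup (fun x => (c : EReal) * f x) F = (c : EReal) * Filter.limsup f F := by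
  have h := OrderIso.apply_blimsup (u := f) (f := F) (p := fun _ => True) (erealMulIso c hc)
  rw [blimsup_true, blimsup_true] at h
  exact h.symm

/-- **Flow interchange lemma** (Matthes–McCann–Savaré), on an (extended) pseudometric
space `(X, d)`.  `B` is a proper, lower semicontinuous functional possessing a `lam`-flow
`S`, `A` is another proper lower semicontinuous functional with `Dom A ⊆ Dom B`.  If `w`
minimizes `u ↦ 1/(2τ) d(u,w̃)² + A(u)` (a proper functional), then
`B(w) + τ·D^B A(w) + (lam/2) d(w,w̃)² ≤ B(w̃)`, where `D^B A(w)` is the dissipation of `A`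
along the flow `S`. -/
theorem flow_interchange {X : Type*} (d : X → X → ℝ)
    (hd_nonneg : ∀ x y, 0 ≤ d x y)
    (hd_refl : ∀ x, d x x = 0)
    (hd_symm : ∀ x y, d x y = d y x)
    (hd_tri : ∀ x y z, d x z ≤ d x y + d y z)
    (A B : X → EReal)
    (hA_proper : ∃ x, A x ≠ ⊤) (hA_nebot : ∀ x, A x ≠ ⊥)
    (hB_proper : ∃ x, B x ≠ ⊤) (hB_nebot : ∀ x, B x ≠ ⊥)
    (hA_lsc : ∀ (x : X) (xs : ℕ → X), Tendsto (fun n => d (xs n) x) atTop (nhds 0) →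
      A x ≤ liminf (fun n => A (xs n)) atTop)
    (hB_lsc : ∀ (x : X) (xs : ℕ → X), Tendsto (fun n => d (xs n) x) atTop (nhds 0) →
      B x ≤ liminf (fun n => B (xs n)) atTop)
    (hdom : ∀ x, A x ≠ ⊤ → B x ≠ ⊤)
    (lam : ℝ) (S : ℝ → X → X)
    (hS0 : ∀ w, S 0 w = w)
    (hSsemi : ∀ s t : ℝ, 0 ≤ s → 0 ≤ t → ∀ w, S (s + t) w = S s (S t w))
    (hScont : ∀ (w : X) (s : ℝ), 0 ≤ s →
      Tendsto (fun t => d (S t w) (S s w)) (nhdsWithin s (Set.Ici 0)) (nhds 0))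
    -- the evolution variational inequality for the `lam`-flow `S` of `B`,
    -- with the upper right Dini derivative expressed as a one-sided `limsup`
    (hEVI : ∀ w w', B w ≠ ⊤ → B w' ≠ ⊤ → ∀ s : ℝ, 0 ≤ s →
      ((1 / 2 : ℝ) : EReal) *
        (limsup (fun h : ℝ =>
            ((((d (S (s + h) w) w') ^ 2 - (d (S s w) w') ^ 2) / h : ℝ) : EReal))
          (nhdsWithin 0 (Set.Ioi 0)))
        + (((lam / 2) * (d (S s w) w') ^ 2 : ℝ) : EReal) + B (S s w) ≤ B w')
    (hmono : ∀ (w : X) (s t : ℝ), 0 ≤ s → s ≤ t → B (S t w) ≤ B (S s w))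
    (τ : ℝ) (hτ : 0 < τ) (wt : X)
    (hproper : ∃ u, (((1 / (2 * τ)) * (d u wt) ^ 2 : ℝ) : EReal) + A u ≠ ⊤)
    (w : X)
    (hmin : ∀ u, (((1 / (2 * τ)) * (d w wt) ^ 2 : ℝ) : EReal) + A w ≤
      (((1 / (2 * τ)) * (d u wt) ^ 2 : ℝ) : EReal) + A u) :
    B w + ((τ : ℝ) : EReal) *
        (limsup (fun h : ℝ => (A w - A (S h w)) * (((1 / h : ℝ)) : EReal))
          (nhdsWithin 0 (Set.Ioi 0)))
      + (((lam / 2) * (d w wt) ^ 2 : ℝ) : EReal) ≤ B wt := by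
  obtain ⟨u0, hu0⟩ := hproper
  -- A w is finite
  have hAw_ne_top : A w ≠ ⊤ := by
    intro h
    apply hu0
    have h1 := hmin u0
    rw [h, EReal.add_top_of_ne_bot (EReal.coe_ne_bot _)] at h1
    exact top_le_iff.mp h1
  have hBw : B w ≠ ⊤ := hdom w hAw_ne_top
  by_cases hBwt : B wt = ⊤
  · rw [hBwt]; exact le_top
  -- EVI at s = 0
  have hEVI0 := hEVI w wt hBw hBwt 0 le_rfl
  simp only [zero_add, hS0] at hEVI0
  -- key inequality
  set f : ℝ → EReal := fun h => (A w - A (S h w)) * (((1 / h : ℝ)) : EReal) with hf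
  set g : ℝ → EReal := fun h =>
    ((((d (S h w) wt) ^ 2 - (d w wt) ^ 2) / h : ℝ) : EReal) with hg
  have key : ((τ : ℝ) : EReal) * limsup f (nhdsWithin 0 (Set.Ioi 0)) ≤
      ((1 / 2 : ℝ) : EReal) * limsup g (nhdsWithin 0 (Set.Ioi 0)) := by
    rw [← limsup_coe_mul hτ, ← limsup_coe_mul (by norm_num : (0:ℝ) < 1/2)]
    refine limsup_le_limsup ?_
    filter_upwards [self_mem_nhdsWithin] with h hh
    simp only [Set.mem_Ioi] at hh
    by_cases hAt : A (S h w) = ⊤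
    · have : f h = ⊥ := by
        rw [hf]
        simp only
        rw [hAt, EReal.sub_top, EReal.bot_mul_coe_of_pos (by positivity)]
      rw [this, EReal.coe_mul_bot_of_pos (by exact_mod_cast hτ)]
      exact bot_le
    · -- both A w and A (S h w) finite
      obtain ⟨a, ha⟩ : ∃ a : ℝ, A w = (a : EReal) :=
        ⟨(A w).toReal, (EReal.coe_toReal hAw_ne_top (hA_nebot w)).symm⟩
      obtain ⟨b, hb⟩ : ∃ b : ℝ, A (S h w) = (b : EReal) :=
        ⟨(A (S h w)).toReal, (EReal.coe_toReal hAt (hA_nebot _)).symm⟩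
      have h1 := hmin (S h w)
      rw [ha, hb] at h1
      rw [← EReal.coe_add, ← EReal.coe_add, EReal.coe_le_coe_iff] at h1
      rw [hf, hg]
      simp only
      rw [ha, hb]
      have hab : a - b ≤ (1 / (2 * τ)) * ((d (S h w) wt) ^ 2 - (d w wt) ^ 2) := by
        nlinarith [h1]
      have hq : (0:ℝ) ≤ τ / h := by positivity
      have h2 := mul_le_mul_of_nonneg_right hab hq
      have hreal : τ * ((a - b) * (1 / h)) ≤
          1 / 2 * (((d (S h w) wt) ^ 2 - (d w wt) ^ 2) / h) := by calc τ * ((a - b) * (1 / h)) = (a - b) * (τ / h) := by ring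
        _ ≤ ((1 / (2 * τ)) * ((d (S h w) wt) ^ 2 - (d w wt) ^ 2)) * (τ / h) := h2
        _ = 1 / 2 * (((d (S h w) wt) ^ 2 - (d w wt) ^ 2) / h) := by
            field_simp
      exact_mod_cast hreal
  -- conclude
  calc B w + ((τ : ℝ) : EReal) * limsup f (nhdsWithin 0 (Set.Ioi 0))
        + (((lam / 2) * (d w wt) ^ 2 : ℝ) : EReal)
      ≤ B w + ((1 / 2 : ℝ) : EReal) * limsup g (nhdsWithin 0 (Set.Ioi 0))
        + (((lam / 2) * (d w wt) ^ 2 : ℝ) : EReal) := by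
        exact add_le_add_left (add_le_add_right key _) _
    _ = ((1 / 2 : ℝ) : EReal) * limsup g (nhdsWithin 0 (Set.Ioi 0))
        + (((lam / 2) * (d w wt) ^ 2 : ℝ) : EReal) + B w := by
        rw [add_comm (B w), add_assoc, add_comm (B w), ← add_assoc]
    _ ≤ B wt := hEVI0
end

section
/- Bound on the heat entropy: Let d ≥ 1 and let h : ℝ_{≥0} → ℝ satisfy |h(z)| ≤ H₁ z^{α₁} + H₂ z^{α₂+1} for all z ≥ 0, where H₁, H₂ ≥ 0, α₁ ∈ (d/(d+2), 1) and α₂ ∈ [0,1]. Then there exists a constant C ≥ 0, depending only on d, H₁, H₂, α₁, α₂, such that for every u ∈ 𝐗 ∩ L²(ℝ^d): ∫_{ℝ^d} |h(u(x))| dx ≤ C(‖u‖²_{L²} + M₂(u) + 1) < ∞. -/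
open MeasureTheory Filter Set
open scoped ENNReal

lemma heat_aux1 {z a α : ℝ} (hz : 0 ≤ z) (ha : 1 ≤ a) (hα0 : 0 < α) (hα1 : α < 1) :
    z ^ α ≤ a * z + a ^ (-(α / (1 - α))) := by
  have h1 : 0 < 1 - α := by linarith
  have ha0 : 0 < a := by linarith
  set b : ℝ := a ^ (-(1 / (1 - α))) with hb
  have hb0 : 0 < b := Real.rpow_pos_of_pos ha0 _
  rcases le_total z b with hzb | hbz
  · have h2 : z ^ α ≤ b ^ α := Real.rpow_le_rpow hz hzb hα0.le
    have hbα : b ^ α = a ^ (-(α / (1 - α))) := by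
      rw [hb, ← Real.rpow_mul ha0.le]
      congr 1
      field_simp
    have haz : 0 ≤ a * z := mul_nonneg ha0.le hz
    rw [hbα] at h2
    linarith
  · have hz0 : 0 < z := lt_of_lt_of_le hb0 hbz
    have h2 : z ^ (α - 1) ≤ b ^ (α - 1) :=
      Real.rpow_le_rpow_of_nonpos hb0 hbz (by linarith)
    have hbm : b ^ (α - 1) = a := by
      rw [hb, ← Real.rpow_mul ha0.le]
      rw [show -(1 / (1 - α)) * (α - 1) = 1 by field_simp; ring]
      exact Real.rpow_one a
    have hsplit : z ^ α = z * z ^ (α - 1) := by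
      rw [show α = 1 + (α - 1) by ring, Real.rpow_add hz0, Real.rpow_one]
      ring_nf
    have h3 : z ^ α ≤ z * a := by
      rw [hsplit]
      exact mul_le_mul_of_nonneg_left (h2.trans_eq hbm) hz0.le
    have hw : 0 ≤ a ^ (-(α / (1 - α))) := (Real.rpow_pos_of_pos ha0 _).le
    have : z * a = a * z := mul_comm z a
    linarith

lemma heat_aux2 {z α : ℝ} (hz : 0 ≤ z) (h0 : 0 ≤ α) (h1 : α ≤ 1) :
    z ^ (α + 1) ≤ z + z ^ 2 := by
  rcases eq_or_lt_of_le hz with h | hz0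
  · rw [← h, Real.zero_rpow (by linarith : α + 1 ≠ 0)]
    norm_num
  rcases le_total z 1 with hz1 | h1z
  · have h2 : z ^ (α + 1) ≤ z ^ (1 : ℝ) :=
      Real.rpow_le_rpow_of_exponent_ge hz0 hz1 (by linarith)
    rw [Real.rpow_one] at h2
    nlinarith [sq_nonneg z]
  · have h2 : z ^ (α + 1) ≤ z ^ (2 : ℝ) :=
      Real.rpow_le_rpow_of_exponent_le h1z (by linarith)
    rw [show (2 : ℝ) = ((2 : ℕ) : ℝ) by norm_num, Real.rpow_natCast] at h2
    nlinarith

/-- **Bound on the heat entropy.**  If `|h(z)| ≤ H₁ z^{α₁} + H₂ z^{α₂+1}` with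
`α₁ ∈ (d/(d+2), 1)` and `α₂ ∈ [0,1]`, then there is a constant `C ≥ 0` depending only on
`d, H₁, H₂, α₁, α₂` such that `∫ |h(u)| ≤ C(‖u‖²_{L²} + M₂(u) + 1) < ∞` for every
`u ∈ 𝐗 ∩ L²(ℝ^d)`. -/
theorem heat_entropy_bound (d : ℕ) (hd : 1 ≤ d) (H₁ H₂ α₁ α₂ : ℝ)
    (hH₁ : 0 ≤ H₁) (hH₂ : 0 ≤ H₂)
    (hα₁ : (d : ℝ) / (d + 2) < α₁ ∧ α₁ < 1) (hα₂ : 0 ≤ α₂ ∧ α₂ ≤ 1) :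
    ∃ C : ℝ, 0 ≤ C ∧ ∀ h : ℝ → ℝ,
      (∀ z : ℝ, 0 ≤ z → |h z| ≤ H₁ * z ^ α₁ + H₂ * z ^ (α₂ + 1)) →
      ∀ u : EuclideanSpace ℝ (Fin d) → ℝ,
        Integrable u →
        (∀ᵐ x ∂(volume : Measure (EuclideanSpace ℝ (Fin d))), 0 ≤ u x) →
        (∫ x, u x) = 1 →
        Integrable (fun x : EuclideanSpace ℝ (Fin d) => ‖x‖ ^ 2 * u x) →
        MemLp u 2 →
        (∫⁻ x, ENNReal.ofReal |h (u x)|) ≤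
          ENNReal.ofReal (C * ((∫ x, u x ^ 2) + (∫ x, ‖x‖ ^ 2 * u x) + 1)) := by
  have hd0 : (0 : ℝ) < d := by exact_mod_cast hd
  have hα₁0 : 0 < α₁ := lt_of_le_of_lt (by positivity) hα₁.1
  have h1α : 0 < 1 - α₁ := by linarith [hα₁.2]
  set s : ℝ := α₁ / (1 - α₁) with hs
  have hds : (d : ℝ) < 2 * s := by
    have h1 : (d : ℝ) < α₁ * (d + 2) := (div_lt_iff₀ (by positivity)).mp hα₁.1
    rw [hs, ← mul_div_assoc, lt_div_iff₀ h1α]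
    nlinarith
  -- the weight function
  set W : EuclideanSpace ℝ (Fin d) → ℝ := fun x => (1 + ‖x‖ ^ 2) ^ (-s) with hW
  have hWint : Integrable W := by
    have := integrable_rpow_neg_one_add_norm_sq
      (E := EuclideanSpace ℝ (Fin d)) (μ := volume) (r := 2 * s)
      (by rw [finrank_euclideanSpace_fin]; exact hds)
    simpa [hW, show -(2 * s) / 2 = -s by ring] using this
  have hWnn : ∀ x : EuclideanSpace ℝ (Fin d), 0 ≤ W x := fun x =>
    Real.rpow_nonneg (by positivity) _
  set I : ℝ := ∫ x, W x with hI
  have hI0 : 0 ≤ I := integral_nonneg hWnn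
  refine ⟨H₁ * (1 + I) + H₂, by positivity, ?_⟩
  intro h hh u hu_int hu_nn hu_mass hu_m2 hu_L2
  have hsq : Integrable (fun x => u x ^ 2) := hu_L2.integrable_sq
  set S : ℝ := ∫ x, u x ^ 2 with hSdef
  set M : ℝ := ∫ x, ‖x‖ ^ 2 * u x with hMdef
  have hS0 : 0 ≤ S := integral_nonneg fun x => sq_nonneg _
  have hM0 : 0 ≤ M := integral_nonneg_of_ae
    (hu_nn.mono fun x hx => mul_nonneg (by positivity) hx)
  -- the dominating function
  have hA : Integrable (fun x : EuclideanSpace ℝ (Fin d) => (1 + ‖x‖ ^ 2) * u x) := by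
    have := hu_int.add hu_m2
    refine this.congr (Eventually.of_forall fun x => ?_)
    simp [add_mul]
  set g : EuclideanSpace ℝ (Fin d) → ℝ :=
    fun x => H₁ * ((1 + ‖x‖ ^ 2) * u x + W x) + H₂ * (u x + u x ^ 2) with hg
  have hg_int : Integrable g :=
    ((hA.add hWint).const_mul H₁).add ((hu_int.add hsq).const_mul H₂)
  have hg_nn : ∀ᵐ x ∂(volume : Measure (EuclideanSpace ℝ (Fin d))), 0 ≤ g x := by
    filter_upwards [hu_nn] with x hx
    have h1 : (0 : ℝ) ≤ (1 + ‖x‖ ^ 2) * u x := mul_nonneg (by positivity) hx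
    have h2 := hWnn x
    have h3 : (0 : ℝ) ≤ u x ^ 2 := sq_nonneg _
    have h4 := mul_nonneg hH₁ (add_nonneg h1 h2)
    have h5 := mul_nonneg hH₂ (add_nonneg hx h3)
    simp only [hg]
    linarith
  have hbound : ∀ᵐ x ∂(volume : Measure (EuclideanSpace ℝ (Fin d))),
      |h (u x)| ≤ g x := by
    filter_upwards [hu_nn] with x hx
    have ha : (1 : ℝ) ≤ 1 + ‖x‖ ^ 2 := by nlinarith [sq_nonneg ‖x‖]
    have hb1 : u x ^ α₁ ≤ (1 + ‖x‖ ^ 2) * u x + W x :=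
      heat_aux1 hx ha hα₁0 hα₁.2
    have hb2 : u x ^ (α₂ + 1) ≤ u x + u x ^ 2 := heat_aux2 hx hα₂.1 hα₂.2
    have := hh (u x) hx
    have t1 : H₁ * u x ^ α₁ ≤ H₁ * ((1 + ‖x‖ ^ 2) * u x + W x) :=
      mul_le_mul_of_nonneg_left hb1 hH₁
    have t2 : H₂ * u x ^ (α₂ + 1) ≤ H₂ * (u x + u x ^ 2) :=
      mul_le_mul_of_nonneg_left hb2 hH₂
    calc |h (u x)| ≤ H₁ * u x ^ α₁ + H₂ * u x ^ (α₂ + 1) := this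
      _ ≤ g x := by rw [hg]; dsimp only; linarith
  have e1 : (∫ x : EuclideanSpace ℝ (Fin d), (1 + ‖x‖ ^ 2) * u x) = 1 + M := by
    simp_rw [add_mul, one_mul]
    rw [integral_add hu_int hu_m2, hu_mass, hMdef]
  have eg : (∫ x, g x) = H₁ * (1 + M + I) + H₂ * (1 + S) := by
    have iA : Integrable (fun x : EuclideanSpace ℝ (Fin d) => (1 + ‖x‖ ^ 2) * u x + W x) :=
      hA.add hWint
    have iB : Integrable (fun x : EuclideanSpace ℝ (Fin d) => u x + u x ^ 2) := hu_int.add hsq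
    have i1 : Integrable (fun x : EuclideanSpace ℝ (Fin d) =>
        H₁ * ((1 + ‖x‖ ^ 2) * u x + W x)) := iA.const_mul H₁
    have i2 : Integrable (fun x : EuclideanSpace ℝ (Fin d) => H₂ * (u x + u x ^ 2)) :=
      iB.const_mul H₂
    simp only [hg]
    rw [integral_add i1 i2, integral_const_mul, integral_const_mul, integral_add hA hWint,
      integral_add hu_int hsq, e1, hu_mass, ← hI, ← hSdef]
  calc (∫⁻ x, ENNReal.ofReal |h (u x)|)
      ≤ ∫⁻ x, ENNReal.ofReal (g x) :=
        lintegral_mono_ae (hbound.mono fun x hx => ENNReal.ofReal_le_ofReal hx)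
    _ = ENNReal.ofReal (∫ x, g x) :=
        (ofReal_integral_eq_lintegral_ofReal hg_int hg_nn).symm
    _ ≤ ENNReal.ofReal ((H₁ * (1 + I) + H₂) * (S + M + 1)) := by
        apply ENNReal.ofReal_le_ofReal
        rw [eg]
        nlinarith [mul_nonneg hH₁ (mul_nonneg hI0 hS0), mul_nonneg hH₁ (mul_nonneg hI0 hM0),
          mul_nonneg hH₁ hS0, mul_nonneg hH₂ hM0]
end
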